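/- Let (σ_k)_{k ∈ Fin n} be an abelian maximal CDP family (so σ_0 = id and there is a permutation ξ of Fin n with σ_{ξ(i)} = σ_i⁻¹ for all i), and let (A^k)_{k ∈ Fin n} be matrices in Matrix (Fin n) (Fin n) ℂ with entries (A^k)_{ij} = a_{ij}^k. Then the partial transpose of the CDP matrix satisfies ρ[𝒜,Σ]^{T₂} = ρ[𝒜̃,Σ'], where Σ' is the maximal CDP family σ'_k = σ_k ∘ ξ and 𝒜̃ = (Ã^k) is given by (Ã^k)_{ij} = a_{ij}^{σ_i⁻¹(σ_j⁻¹(k))}. Consequently, ρ[𝒜,Σ]^{T₂} is positive semidefinite if and only if every Ã^k is positive semidefinite. -/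

import Mathlib

open ComplexOrder

/-- The CDP matrix of `A` and a permutation `σ`. -/
def cdpMatrix {n : ℕ} (A : Matrix (Fin n) (Fin n) ℂ) (σ : Equiv.Perm (Fin n)) :
    Matrix (Fin n × Fin n) (Fin n × Fin n) ℂ :=
  Matrix.of fun x y => if x.2 = σ x.1 ∧ y.2 = σ y.1 then A x.1 y.1 else 0

/-- The partial transpose (on the second factor) of a matrix indexed by `Fin n × Fin n`. -/
def ptranspose {n : ℕ} (X : Matrix (Fin n × Fin n) (Fin n × Fin n) ℂ) :
    Matrix (Fin n × Fin n) (Fin n × Fin n) ℂ :=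
  Matrix.of fun x y => X (x.1, y.2) (y.1, x.2)

lemma posSemidef_blockDiagonal_iff {m o : Type*} [Fintype m] [Fintype o]
    [DecidableEq m] [DecidableEq o] (M : o → Matrix m m ℂ) :
    (Matrix.blockDiagonal M).PosSemidef ↔ ∀ k, (M k).PosSemidef := by
  constructor
  · intro h k
    have h2 := h.submatrix (fun i : m => ((i, k) : m × o))
    convert h2 using 1
    ext i j
    simp [Matrix.blockDiagonal_apply]
  · intro h
    choose B hB using fun k => (by open scoped MatrixOrder in exact CStarAlgebra.nonneg_iff_eq_star_mul_self.mp (h k).nonneg :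
      ∃ B : Matrix m m ℂ, M k = star B * B)
    have hM : Matrix.blockDiagonal M =
        (Matrix.blockDiagonal B).conjTranspose * Matrix.blockDiagonal B := by
      rw [Matrix.blockDiagonal_conjTranspose, ← Matrix.blockDiagonal_mul]
      exact congrArg _ (funext hB)
    rw [hM]
    exact Matrix.posSemidef_conjTranspose_mul_self _

theorem Equiv.Perm.inv_apply_self {α : Type*} (f : Equiv.Perm α) (x : α) : f⁻¹ (f x) = x :=
  Equiv.Perm.inv_eq_iff_eq.mpr rfl

/-- For an abelian maximal CDP family, the partial transpose of `ρ[𝒜,Σ]` is the CDP matrix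
`ρ[𝒜̃,Σ']` where `σ'_k = σ_k ∘ ξ` (with `σ_{ξ(i)} = σ_i⁻¹`) and
`(Ã^k)_{ij} = a_{ij}^{σ_i⁻¹(σ_j⁻¹(k))}`; consequently `ρ[𝒜,Σ]^{T₂}` is positive
semidefinite iff every `Ã^k` is. -/
theorem ptranspose_cdpMatrix_abelian {n : ℕ} [NeZero n] (σ : Fin n → Equiv.Perm (Fin n))
    (hcdp : ∀ i j, i ≠ j → ∀ k, σ i k ≠ σ j k)
    (hnorm : ∀ i, σ i 0 = i)
    (hab : ∀ i j, σ i * σ j = σ j * σ i)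
    (ξ : Equiv.Perm (Fin n)) (hξ : ∀ i, σ (ξ i) = (σ i)⁻¹)
    (A : Fin n → Matrix (Fin n) (Fin n) ℂ) :
    (ptranspose (∑ k, cdpMatrix (A k) (σ k)) =
      ∑ k, cdpMatrix (Matrix.of fun i j => A ((σ i)⁻¹ ((σ j)⁻¹ k)) i j) (σ k * ξ)) ∧
    ((ptranspose (∑ k, cdpMatrix (A k) (σ k))).PosSemidef ↔
      ∀ k, (Matrix.of fun i j => A ((σ i)⁻¹ ((σ j)⁻¹ k)) i j :
        Matrix (Fin n) (Fin n) ℂ).PosSemidef) := by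
  have hswap : ∀ i j, σ i j = σ j i := by
    intro i j
    have h0 : σ i (σ j 0) = σ j (σ i 0) := by
      calc σ i (σ j 0) = (σ i * σ j) 0 := rfl
        _ = (σ j * σ i) 0 := by rw [hab]
        _ = σ j (σ i 0) := rfl
    simpa [hnorm] using h0
  have hcomm : ∀ i j x, (σ j)⁻¹ (σ i x) = σ i ((σ j)⁻¹ x) := by
    intro i j x
    have h1 : σ j (σ i ((σ j)⁻¹ x)) = σ i x := by
      calc σ j (σ i ((σ j)⁻¹ x)) = (σ j * σ i) ((σ j)⁻¹ x) := rfl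
        _ = (σ i * σ j) ((σ j)⁻¹ x) := by rw [hab]
        _ = σ i (σ j ((σ j)⁻¹ x)) := rfl
        _ = σ i x := by simp
    exact Equiv.Perm.inv_eq_iff_eq.mpr h1.symm
  have hξ' : ∀ k i, σ k (ξ i) = (σ i)⁻¹ k := by
    intro k i
    rw [hswap k (ξ i), hξ]
  have key : ptranspose (∑ k, cdpMatrix (A k) (σ k)) =
      ∑ k, cdpMatrix (Matrix.of fun i j => A ((σ i)⁻¹ ((σ j)⁻¹ k)) i j) (σ k * ξ) := by
    ext x y
    obtain ⟨i, p⟩ := x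
    obtain ⟨j, q⟩ := y
    simp only [ptranspose, cdpMatrix, Matrix.of_apply, Matrix.sum_apply]
    refine Fintype.sum_equiv (σ i * σ j) _ _ fun k => ?_
    simp only [Equiv.Perm.coe_mul, Function.comp_apply, Matrix.of_apply]
    simp only [hξ' _ i, hξ' _ j]
    have e3 : (σ i)⁻¹ ((σ j)⁻¹ ((σ i) ((σ j) k))) = k := by
      rw [hcomm, Equiv.Perm.inv_apply_self, Equiv.Perm.inv_apply_self]
    have e2 : (σ j)⁻¹ ((σ i) ((σ j) k)) = σ k i := by
      rw [hcomm, Equiv.Perm.inv_apply_self, hswap i k]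
    have e1 : (σ i)⁻¹ ((σ i) ((σ j) k)) = σ k j := by
      rw [Equiv.Perm.inv_apply_self, hswap j k]
    rw [e3, e1, e2]
    exact if_congr and_comm rfl rfl
  have main : ∀ (F : Fin n → Matrix (Fin n) (Fin n) ℂ),
      (∑ k, cdpMatrix (F k) (σ k * ξ)).PosSemidef ↔ ∀ k, (F k).PosSemidef := by
    intro F
    let e : (Fin n × Fin n) ≃ (Fin n × Fin n) :=
      ⟨fun x => (x.1, σ x.1 x.2), fun x => (x.1, (σ x.1)⁻¹ x.2),
        fun x => by simp, fun x => by simp⟩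
    have hsum : (∑ k, cdpMatrix (F k) (σ k * ξ)) = (Matrix.blockDiagonal F).submatrix e e := by
      ext x y
      obtain ⟨i, p⟩ := x
      obtain ⟨j, q⟩ := y
      simp only [Matrix.submatrix_apply, Matrix.sum_apply, cdpMatrix, Matrix.of_apply, e,
        Equiv.coe_fn_mk, Matrix.blockDiagonal_apply]
      rw [Fintype.sum_eq_single (σ i p) (fun b hb => ?_)]
      · simp only [Equiv.Perm.coe_mul, Function.comp_apply, hξ']
        have hc : (p = (σ i)⁻¹ ((σ i) p) ∧ q = (σ j)⁻¹ ((σ i) p)) ↔ ((σ i) p = (σ j) q) := by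
          rw [Equiv.Perm.inv_apply_self]
          simp only [true_and]
          rw [Equiv.Perm.eq_inv_iff_eq]
          exact eq_comm
        exact if_congr hc rfl rfl
      · simp only [Equiv.Perm.coe_mul, Function.comp_apply, hξ']
        apply if_neg
        rintro ⟨h1, -⟩
        exact hb (by rw [h1]; simp)
    rw [hsum, Matrix.posSemidef_submatrix_equiv e, posSemidef_blockDiagonal_iff]
  exact ⟨key, by rw [key]; exact main fun k => Matrix.of fun i j => A ((σ i)⁻¹ ((σ j)⁻¹ k)) i j⟩
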